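/- The Λ-duplicate D is not a Gruenhage space. -/

import Mathlib

/-- An element of Kurepa's tree `Λ`: an injective function `t : α → ω` with countable
ordinal domain `α` and coinfinite range.  The function is represented as a total function
on ordinals which takes the junk value `0` outside of the domain. -/
structure Lambda : Type 1 where
  toFun : Ordinal.{0} → ℕ
  dom : Ordinal.{0}
  countable : dom.card ≤ Cardinal.aleph0
  inj : ∀ β γ, β < dom → γ < dom → toFun β = toFun γ → β = γ
  coinfinite : {n : ℕ | ∀ β, β < dom → toFun β ≠ n}.Infinite
  junk : ∀ β, ¬ β < dom → toFun β = 0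

/-- The tree order on `Λ`: `s ≼ t` iff `t` extends `s`. -/
def Lambda.le (s t : Lambda) : Prop :=
  s.dom ≤ t.dom ∧ ∀ β, β < s.dom → s.toFun β = t.toFun β

/-- The strict tree order on `Λ`. -/
def Lambda.lt (s t : Lambda) : Prop := Lambda.le s t ∧ s ≠ t

/-- `r ≺ s` for `r ∈ Λ ∪ {0}` (`none` plays the role of the extra least element `0`). -/
def precLt : Option Lambda → Lambda → Prop
  | none, _ => True
  | some r, s => Lambda.lt r s

/-- The interval `(r, t] = {s ∈ Λ : r ≺ s ≼ t}`, with `r ∈ Λ ∪ {0}`. -/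
def lamIoc (r : Option Lambda) (t : Lambda) : Set Lambda :=
  {s | precLt r s ∧ Lambda.le s t}

/-- The position of the minimum of `t` on the ordinal interval `[δ, β)`. -/
noncomputable def minPos (t : Ordinal.{0} → ℕ) (δ β : Ordinal.{0}) : Ordinal.{0} :=
  sInf {ξ | δ ≤ ξ ∧ ξ < β ∧ ∀ η, δ ≤ η → η < β → t ξ ≤ t η}

lemma minPos_lt (t : Ordinal.{0} → ℕ) {δ β : Ordinal.{0}} (h : δ < β) : minPos t δ β < β := by
  have hne : {ξ : Ordinal.{0} | δ ≤ ξ ∧ ξ < β ∧ ∀ η, δ ≤ η → η < β → t ξ ≤ t η}.Nonempty := by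
    have h1 : {n : ℕ | ∃ ξ : Ordinal.{0}, δ ≤ ξ ∧ ξ < β ∧ t ξ = n}.Nonempty :=
      ⟨t δ, δ, le_refl _, h, rfl⟩
    obtain ⟨ξ, hξ1, hξ2, hξ3⟩ := Nat.sInf_mem h1
    refine ⟨ξ, hξ1, hξ2, fun η h1' h2' => ?_⟩
    rw [hξ3]
    exact Nat.sInf_le ⟨η, h1', h2', rfl⟩
  obtain ⟨ξ, hξ⟩ := hne
  calc minPos t δ β ≤ ξ := csInf_le (OrderBot.bddBelow _) hξ
    _ < β := hξ.2.1

/-- The sequence `τ` computed from the starting ordinal `β₀` downwards: `τ` is obtained by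
repeatedly passing from `β` to the position of the minimum of `t` on `[δ, β)`, stopping upon
reaching `δ`.  The resulting finite sequence `(β_k, …, β_1)` is recorded as a list in the
order `[β_k, …, β_1]` (so concatenation of the lists corresponds to `⌢`). -/
noncomputable def tauFrom (δ : Ordinal.{0}) (t : Ordinal.{0} → ℕ) : Ordinal.{0} → List Ordinal.{0} :=
  WellFounded.fix wellFounded_lt
    (fun β IH => if h : δ < β then IH (minPos t δ β) (minPos_lt t h) ++ [minPos t δ β] else [])

/-- The finite sequence `τ(s,t)` of ordinals, for `s ≼ t` in `Λ`. -/
noncomputable def tau (s t : Lambda) : List Ordinal.{0} :=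
  tauFrom s.dom t.toFun t.dom

/-- `ℓ(s,t)`, the length of `τ(s,t)`. -/
noncomputable def ell (s t : Lambda) : ℕ := (tau s t).length

/-- The underlying set of the `Λ`-duplicate: `D = Λ × {1, -1}`. -/
abbrev Dup : Type 1 := Lambda × ℤˣ

/-- The basic open sets `W(r,t,i)` of the `Λ`-duplicate. -/
noncomputable def Wset (r : Option Lambda) (t : Lambda) (i : ℤˣ) : Set Dup :=
  {q | q.1 ∈ lamIoc r t ∧ q.2 = (-1) ^ ell q.1 t * i}

/-- The collection of all basic open sets `W(r,t,i)` with `r ≺ t`. -/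
noncomputable def WBasis : Set (Set Dup) :=
  {S | ∃ (r : Option Lambda) (t : Lambda) (i : ℤˣ), precLt r t ∧ S = Wset r t i}

/-- The topology of the `Λ`-duplicate, generated by the basic sets `W(r,t,i)`. -/
noncomputable instance : TopologicalSpace Dup := TopologicalSpace.generateFrom WBasis

/-- A topological space is Gruenhage if there are a sequence `(𝒰 n)` of families of open sets
and sets `R n` such that any two distinct points are separated by some member of some `𝒰 n`
(i.e. `{x,y} ∩ U` is a singleton), and two distinct members of `𝒰 n` always intersect
exactly in `R n`. -/
def Gruenhage (X : Type*) [TopologicalSpace X] : Prop :=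
  ∃ (U : ℕ → Set (Set X)) (R : ℕ → Set X),
    (∀ n, ∀ V ∈ U n, IsOpen V) ∧
    (∀ x y : X, x ≠ y → ∃ n, ∃ V ∈ U n, ∃ z, ({x, y} : Set X) ∩ V = {z}) ∧
    (∀ n, ∀ V ∈ U n, ∀ V' ∈ U n, V ≠ V' → V ∩ V' = R n)


/-! ### Basic facts about the order on `Lambda` -/

namespace Lambda

lemma toFun_eq_of_le {s t : Lambda} (h : s.le t) (hd : s.dom = t.dom) : s = t := by
  obtain ⟨f, d, c, i, ci, j⟩ := s
  obtain ⟨f', d', c', i', ci', j'⟩ := t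
  simp only at hd
  subst hd
  simp only [mk.injEq, and_true, true_and]
  funext β
  by_cases hb : β < d
  · exact h.2 β hb
  · rw [j β hb, j' β hb]

lemma le_refl (s : Lambda) : s.le s := ⟨le_rfl, fun _ _ => rfl⟩

lemma le_trans {s t u : Lambda} (h1 : s.le t) (h2 : t.le u) : s.le u :=
  ⟨h1.1.trans h2.1, fun β hb => (h1.2 β hb).trans (h2.2 β (lt_of_lt_of_le hb h1.1))⟩

lemma dom_lt_of_lt {s t : Lambda} (h : s.lt t) : s.dom < t.dom := by
  rcases lt_or_eq_of_le h.1.1 with h' | h'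
  · exact h'
  · exact absurd (toFun_eq_of_le h.1 h') h.2

lemma lt_of_dom_lt {s t : Lambda} (h : s.le t) (hd : s.dom < t.dom) : s.lt t := by
  refine ⟨h, fun he => ?_⟩
  subst he; exact lt_irrefl _ hd

lemma lt_of_le_of_lt' {s t u : Lambda} (h1 : s.le t) (h2 : t.lt u) : s.lt u := by
  have := le_trans h1 h2.1
  exact lt_of_dom_lt this (lt_of_le_of_lt h1.1 (dom_lt_of_lt h2))

lemma lt_of_lt_of_le' {s t u : Lambda} (h1 : s.lt t) (h2 : t.le u) : s.lt u := by
  have := le_trans h1.1 h2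
  exact lt_of_dom_lt this (lt_of_lt_of_le (dom_lt_of_lt h1) h2.1)

/-- Two restrictions of a common element are comparable;
if `x, y ≼ z` and `x.dom ≤ y.dom` then `x ≼ y`. -/
lemma le_of_le_le {x y z : Lambda} (hx : x.le z) (hy : y.le z) (hd : x.dom ≤ y.dom) :
    x.le y := by
  refine ⟨hd, fun β hb => ?_⟩
  rw [hx.2 β hb, hy.2 β (lt_of_lt_of_le hb hd)]

/-- The range of an element of `Lambda`. -/
def rng (t : Lambda) : Set ℕ := {m | ∃ β, β < t.dom ∧ t.toFun β = m}

lemma rng_mono {s t : Lambda} (h : s.le t) : s.rng ⊆ t.rng := by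
  rintro m ⟨β, hb, he⟩
  exact ⟨β, lt_of_lt_of_le hb h.1, (h.2 β hb).symm.trans he⟩

/-- Restriction of an element of `Lambda` to a smaller domain. -/
noncomputable def restrict (t : Lambda) (θ : Ordinal.{0}) (hθ : θ ≤ t.dom) : Lambda where
  toFun β := if β < θ then t.toFun β else 0
  dom := θ
  countable := _root_.le_trans (Ordinal.card_le_card hθ) t.countable
  inj := by
    intro β γ hb hg he
    simp only [if_pos hb, if_pos hg] at he
    exact t.inj β γ (lt_of_lt_of_le hb hθ) (lt_of_lt_of_le hg hθ) he
  coinfinite := by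
    apply t.coinfinite.mono
    intro n hn β hb
    simp only [if_pos hb]
    exact hn β (lt_of_lt_of_le hb hθ)
  junk := fun β hb => if_neg hb

lemma restrict_le (t : Lambda) (θ : Ordinal.{0}) (hθ : θ ≤ t.dom) :
    (t.restrict θ hθ).le t := ⟨hθ, fun β hb => if_pos hb⟩

@[simp] lemma restrict_dom (t : Lambda) (θ : Ordinal.{0}) (hθ : θ ≤ t.dom) :
    (t.restrict θ hθ).dom = θ := rfl

/-- Extension of an element of `Lambda` by one fresh value. -/
noncomputable def extend (t : Lambda) (m : ℕ) (hm : m ∉ t.rng) : Lambda where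
  toFun β := if β = t.dom then m else t.toFun β
  dom := Order.succ t.dom
  countable := by
    rw [Ordinal.card_succ]
    calc t.dom.card + 1 ≤ Cardinal.aleph0 + 1 := add_le_add t.countable (_root_.le_refl _)
      _ = Cardinal.aleph0 := Cardinal.add_one_of_aleph0_le (_root_.le_refl _)
  inj := by
    intro β γ hb hg he
    rw [Order.lt_succ_iff] at hb hg
    rcases eq_or_lt_of_le hb with hb' | hb' <;> rcases eq_or_lt_of_le hg with hg' | hg'
    · rw [hb', hg']
    · simp only [if_pos hb', if_neg (ne_of_lt hg')] at he
      exact absurd ⟨γ, hg', he.symm⟩ hm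
    · simp only [if_neg (ne_of_lt hb'), if_pos hg'] at he
      exact absurd ⟨β, hb', he⟩ hm
    · simp only [if_neg (ne_of_lt hb'), if_neg (ne_of_lt hg')] at he
      exact t.inj β γ hb' hg' he
  coinfinite := by
    apply ((t.coinfinite.diff (Set.finite_singleton m))).mono
    rintro n ⟨hn, hn'⟩ β hb
    rw [Order.lt_succ_iff] at hb
    rcases eq_or_lt_of_le hb with hb' | hb'
    · simp only [if_pos hb']
      simpa using fun h => hn' h.symm
    · simp only [if_neg (ne_of_lt hb')]
      exact hn β hb'
  junk := by
    intro β hb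
    rw [Order.lt_succ_iff, not_le] at hb
    simp only [if_neg (ne_of_gt hb)]
    exact t.junk β (not_lt.mpr (le_of_lt hb))

lemma extend_lt (t : Lambda) (m : ℕ) (hm : m ∉ t.rng) : t.lt (t.extend m hm) := by
  refine lt_of_dom_lt ⟨le_of_lt (Order.lt_succ _), fun β hb => ?_⟩ (Order.lt_succ _)
  exact (if_neg (ne_of_lt hb)).symm

@[simp] lemma extend_dom (t : Lambda) (m : ℕ) (hm : m ∉ t.rng) :
    (t.extend m hm).dom = Order.succ t.dom := rfl

@[simp] lemma extend_apply_dom (t : Lambda) (m : ℕ) (hm : m ∉ t.rng) :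
    (t.extend m hm).toFun t.dom = m := by simp [extend]

lemma extend_rng (t : Lambda) (m : ℕ) (hm : m ∉ t.rng) :
    (t.extend m hm).rng = t.rng ∪ {m} := by
  ext x
  constructor
  · rintro ⟨β, hb, he⟩
    rw [extend_dom t m hm, Order.lt_succ_iff] at hb
    rcases eq_or_lt_of_le hb with hb' | hb'
    · right; rw [← he]; simp only [extend, if_pos hb']; rfl
    · left; exact ⟨β, hb', by simp only [extend, if_neg (ne_of_lt hb')] at he; exact he⟩
  · rintro (⟨β, hb, he⟩ | he)
    · exact ⟨β, lt_of_lt_of_le (lt_of_lt_of_le hb le_rfl) (le_of_lt (Order.lt_succ _)),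
        by simp only [extend, if_neg (ne_of_lt hb)]; exact he⟩
    · exact ⟨t.dom, Order.lt_succ _, by simp only [extend, if_pos rfl]; exact he.symm⟩

end Lambda
/-! ### Walk lemmas -/

section Walk
open Ordinal

/-- The set of positions of the minimum. -/
def minSet (t : Ordinal.{0} → ℕ) (δ β : Ordinal.{0}) : Set Ordinal.{0} :=
  {ξ | δ ≤ ξ ∧ ξ < β ∧ ∀ η, δ ≤ η → η < β → t ξ ≤ t η}

lemma minSet_nonempty (t : Ordinal.{0} → ℕ) {δ β : Ordinal.{0}} (h : δ < β) :
    (minSet t δ β).Nonempty := by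
  have h1 : {n : ℕ | ∃ ξ : Ordinal.{0}, δ ≤ ξ ∧ ξ < β ∧ t ξ = n}.Nonempty :=
    ⟨t δ, δ, le_refl _, h, rfl⟩
  obtain ⟨ξ, hξ1, hξ2, hξ3⟩ := Nat.sInf_mem h1
  refine ⟨ξ, hξ1, hξ2, fun η h1' h2' => ?_⟩
  rw [hξ3]
  exact Nat.sInf_le ⟨η, h1', h2', rfl⟩

lemma minPos_mem (t : Ordinal.{0} → ℕ) {δ β : Ordinal.{0}} (h : δ < β) :
    minPos t δ β ∈ minSet t δ β :=
  csInf_mem (minSet_nonempty t h)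

lemma le_minPos (t : Ordinal.{0} → ℕ) {δ β : Ordinal.{0}} (h : δ < β) :
    δ ≤ minPos t δ β := (minPos_mem t h).1

lemma minPos_eq_of_mem {t : Ordinal.{0} → ℕ} {δ β ξ : Ordinal.{0}}
    (h1 : ξ ∈ minSet t δ β) (h2 : ∀ η ∈ minSet t δ β, ξ ≤ η) :
    minPos t δ β = ξ :=
  le_antisymm (csInf_le (OrderBot.bddBelow _) h1) (le_csInf ⟨ξ, h1⟩ h2)

lemma tauFrom_unfold (δ : Ordinal.{0}) (t : Ordinal.{0} → ℕ) (β : Ordinal.{0}) :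
    tauFrom δ t β =
      if h : δ < β then tauFrom δ t (minPos t δ β) ++ [minPos t δ β] else [] := by
  rw [tauFrom, WellFounded.fix_eq]

lemma tauFrom_of_not_lt {δ β : Ordinal.{0}} (t : Ordinal.{0} → ℕ) (h : ¬ δ < β) :
    tauFrom δ t β = [] := by
  rw [tauFrom_unfold, dif_neg h]

lemma tauFrom_of_lt {δ β : Ordinal.{0}} (t : Ordinal.{0} → ℕ) (h : δ < β) :
    tauFrom δ t β = tauFrom δ t (minPos t δ β) ++ [minPos t δ β] := by
  rw [tauFrom_unfold, dif_pos h]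

lemma minPos_eq_self {t : Ordinal.{0} → ℕ} {δ β : Ordinal.{0}} (h : δ < β)
    (hm : ∀ η, δ ≤ η → η < β → t δ ≤ t η) : minPos t δ β = δ :=
  minPos_eq_of_mem ⟨le_refl δ, h, hm⟩ (fun _ hη => hη.1)

lemma tauFrom_single {t : Ordinal.{0} → ℕ} {δ β : Ordinal.{0}} (h : δ < β)
    (hm : ∀ η, δ ≤ η → η < β → t δ ≤ t η) : tauFrom δ t β = [δ] := by
  rw [tauFrom_of_lt t h, minPos_eq_self h hm, tauFrom_of_not_lt t (lt_irrefl δ), List.nil_append]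

lemma mem_tauFrom {t : Ordinal.{0} → ℕ} {δ : Ordinal.{0}} :
    ∀ β : Ordinal.{0}, ∀ p ∈ tauFrom δ t β, δ ≤ p ∧ p < β := by
  intro β
  induction β using Ordinal.induction with
  | h β IH =>
    intro p hp
    by_cases h : δ < β
    · rw [tauFrom_of_lt t h] at hp
      rcases List.mem_append.mp hp with hp' | hp'
      · obtain ⟨h1, h2⟩ := IH _ (minPos_lt t h) p hp'
        exact ⟨h1, h2.trans (minPos_lt t h)⟩
      · rw [List.mem_singleton] at hp'
        subst hp'
        exact ⟨le_minPos t h, minPos_lt t h⟩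
    · rw [tauFrom_of_not_lt t h] at hp
      exact absurd hp List.not_mem_nil

lemma tauFrom_congr {f g : Ordinal.{0} → ℕ} {δ : Ordinal.{0}} :
    ∀ β : Ordinal.{0}, (∀ ξ, δ ≤ ξ → ξ < β → f ξ = g ξ) → tauFrom δ f β = tauFrom δ g β := by
  intro β
  induction β using Ordinal.induction with
  | h β IH =>
    intro hfg
    by_cases h : δ < β
    · have hset : minSet f δ β = minSet g δ β := by
        ext ξ
        constructor
        · rintro ⟨h1, h2, h3⟩
          exact ⟨h1, h2, fun η hη1 hη2 => by
            rw [← hfg ξ h1 h2, ← hfg η hη1 hη2]; exact h3 η hη1 hη2⟩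
        · rintro ⟨h1, h2, h3⟩
          exact ⟨h1, h2, fun η hη1 hη2 => by
            rw [hfg ξ h1 h2, hfg η hη1 hη2]; exact h3 η hη1 hη2⟩
      have hpos : minPos f δ β = minPos g δ β := by
        rw [minPos, minPos]
        show sInf (minSet f δ β) = sInf (minSet g δ β)
        rw [hset]
      rw [tauFrom_of_lt f h, tauFrom_of_lt g h, hpos,
        IH _ (by rw [← hpos]; exact minPos_lt f h)
          (fun ξ h1 h2 => hfg ξ h1 (h2.trans (by rw [← hpos]; exact minPos_lt f h)))]
    · rw [tauFrom_of_not_lt f h, tauFrom_of_not_lt g h]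

/-- The walk-splitting lemma: if all values of `f` on `[δ, γ)` strictly dominate the values
of `f` at the positions of the walk from `β` down to `γ`, then the walk from `β` down to `δ`
passes through `γ`. -/
lemma tauFrom_split (f : Ordinal.{0} → ℕ) {δ γ : Ordinal.{0}} (hδγ : δ ≤ γ) :
    ∀ β : Ordinal.{0}, γ ≤ β →
      (∀ ξ, δ ≤ ξ → ξ < γ → ∀ p ∈ tauFrom γ f β, f p < f ξ) →
      tauFrom δ f β = tauFrom δ f γ ++ tauFrom γ f β := by
  intro β
  induction β using Ordinal.induction with
  | h β IH =>
    intro hγβ hdom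
    by_cases h : γ < β
    · set η := minPos f γ β with hη
      have hmem : η ∈ minSet f γ β := minPos_mem f h
      have hηβ : η < β := minPos_lt f h
      have hγη : γ ≤ η := hmem.1
      have hηtau : η ∈ tauFrom γ f β := by
        rw [tauFrom_of_lt f h]
        exact List.mem_append.mpr (Or.inr (List.mem_singleton.mpr rfl))
      have hmem' : η ∈ minSet f δ β := by
        refine ⟨hδγ.trans hγη, hηβ, fun ζ hζ1 hζ2 => ?_⟩
        by_cases hζγ : γ ≤ ζ
        · exact hmem.2.2 ζ hζγ hζ2
        · exact le_of_lt (hdom ζ hζ1 (not_le.mp hζγ) η hηtau)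
      have hpos : minPos f δ β = η := by
        refine minPos_eq_of_mem hmem' (fun ζ hζ => ?_)
        by_cases hζγ : γ ≤ ζ
        · exact csInf_le (OrderBot.bddBelow _) ⟨hζγ, hζ.2.1, fun χ hχ1 hχ2 =>
            hζ.2.2 χ (hδγ.trans hχ1) hχ2⟩
        · exact absurd (hζ.2.2 η (hδγ.trans hγη) hηβ)
            (not_le.mpr (hdom ζ hζ.1 (not_le.mp hζγ) η hηtau))
      have hsub : ∀ p ∈ tauFrom γ f η, p ∈ tauFrom γ f β := by
        intro p hp
        rw [tauFrom_of_lt f h]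
        exact List.mem_append.mpr (Or.inl hp)
      rw [tauFrom_of_lt f (lt_of_le_of_lt hδγ h), hpos,
        IH η hηβ hγη (fun ξ h1 h2 p hp => hdom ξ h1 h2 p (hsub p hp)),
        tauFrom_of_lt f h, hη, List.append_assoc]
    · have : β = γ := le_antisymm (not_lt.mp h) hγβ
      subst this
      rw [tauFrom_of_not_lt f (lt_irrefl β), List.append_nil]

end Walk
/-! ### Lemmas about `tau` and `ell` -/

section TauEll

lemma tau_self (t : Lambda) : tau t t = [] := tauFrom_of_not_lt _ (lt_irrefl _)

lemma ell_self (t : Lambda) : ell t t = 0 := by rw [ell, tau_self]; rfl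

lemma tau_single {x y : Lambda} (hd : x.dom < y.dom)
    (hm : ∀ η, x.dom ≤ η → η < y.dom → y.toFun x.dom ≤ y.toFun η) :
    tau x y = [x.dom] := tauFrom_single hd hm

lemma ell_single {x y : Lambda} (hd : x.dom < y.dom)
    (hm : ∀ η, x.dom ≤ η → η < y.dom → y.toFun x.dom ≤ y.toFun η) :
    ell x y = 1 := by rw [ell, tau_single hd hm]; rfl

private lemma le_foldr_max (f : Ordinal.{0} → ℕ) :
    ∀ l : List Ordinal.{0}, ∀ p ∈ l, f p ≤ (l.map f).foldr max 0 := by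
  intro l
  induction l with
  | nil => intro p hp; exact absurd hp List.not_mem_nil
  | cons a l IH =>
    intro p hp
    rcases List.mem_cons.mp hp with hp' | hp'
    · subst hp'; exact le_max_left _ _ |>.trans (le_of_eq rfl)
    · exact le_trans (IH p hp') (le_max_right _ _)

/-- The recentering lemma: if `t ≺ t'` then for a tail of `s ≼ t` the walk from `t'` to `s`
passes through `t`. -/
lemma exists_recenter {t t' : Lambda} (h : Lambda.lt t t') {θ₀ : Ordinal.{0}}
    (hθ₀ : θ₀ < t.dom) :
    ∃ θ : Ordinal.{0}, θ₀ ≤ θ ∧ θ < t.dom ∧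
      ∀ s : Lambda, s.le t → θ < s.dom → tau s t' = tau s t ++ tau t t' := by
  rcases Ordinal.zero_or_succ_or_isSuccLimit t.dom with h0 | ⟨σ, hσ⟩ | hlim
  · exact absurd hθ₀ (by rw [h0]; exact not_lt_zero)
  · refine ⟨σ, ?_, by rw [← hσ]; exact Order.lt_succ σ, fun s hs hds => ?_⟩
    · rw [← hσ, Order.lt_succ_iff] at hθ₀; exact hθ₀
    · have hdeq : s.dom = t.dom := le_antisymm hs.1 (by rw [← hσ, Order.succ_le_iff]; exact hds)
      have : s = t := Lambda.toFun_eq_of_le hs hdeq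
      subst this
      rw [tau_self, List.nil_append]
  · -- limit case
    set M : ℕ := ((tau t t').map t'.toFun).foldr max 0 with hM
    set A : Set Ordinal.{0} := {ξ | ξ < t.dom ∧ t.toFun ξ ≤ M} with hA
    have hAfin : A.Finite := by
      apply Set.Finite.of_finite_image (f := t.toFun)
      · apply Set.Finite.subset (Set.finite_Iic M)
        rintro n ⟨ξ, hξ, rfl⟩
        exact hξ.2
      · intro a ha b hb hab
        exact t.inj a b ha.1 hb.1 hab
    have hfin : (A ∪ {θ₀}).Finite := hAfin.union (Set.finite_singleton θ₀)
    have hne : (A ∪ {θ₀}).Nonempty := ⟨θ₀, Or.inr rfl⟩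
    set b : Ordinal.{0} := sSup (A ∪ {θ₀}) with hb
    have hbmem : b ∈ A ∪ {θ₀} := Set.Nonempty.csSup_mem hne hfin
    have hblt : b < t.dom := by
      rcases hbmem with hb' | hb'
      · exact hb'.1
      · rw [hb']; exact hθ₀
    refine ⟨b + 1, ?_, hlim.add_one_lt hblt, fun s hs hds => ?_⟩
    · calc θ₀ ≤ b := le_csSup hfin.bddAbove (Or.inr rfl)
        _ ≤ b + 1 := le_of_lt (lt_add_one b)
    · have key : ∀ ξ, s.dom ≤ ξ → ξ < t.dom → ∀ p ∈ tauFrom t.dom t'.toFun t'.dom,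
          t'.toFun p < t'.toFun ξ := by
        intro ξ hξ1 hξ2 p hp
        have hξA : ξ ∉ A := by
          intro hmem
          have : ξ ≤ b := le_csSup hfin.bddAbove (Or.inl hmem)
          have : ξ < s.dom := lt_of_le_of_lt (this.trans (le_of_lt (lt_add_one b))) hds
          exact absurd hξ1 (not_le.mpr this)
        have hMlt : M < t.toFun ξ := by
          by_contra hc
          exact hξA ⟨hξ2, not_lt.mp hc⟩
        have hpM : t'.toFun p ≤ M := le_foldr_max t'.toFun (tau t t') p hp
        rw [← h.1.2 ξ hξ2]
        exact lt_of_le_of_lt hpM hMlt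
      have hsplit := tauFrom_split t'.toFun hs.1 t'.dom h.1.1 key
      rw [tau, hsplit, tau, tau]
      congr 1
      exact tauFrom_congr t.dom (fun ξ _ hξ2 => (h.1.2 ξ hξ2).symm)

lemma ell_concat {s t t' : Lambda} (hcat : tau s t' = tau s t ++ tau t t') :
    ell s t' = ell s t + ell t t' := by
  rw [ell, ell, ell, hcat, List.length_append]

end TauEll

/-! ### The basis lemma -/

section Basis

/-- Order on `Option Lambda` viewing `none` as the bottom element. -/
def optLe : Option Lambda → Option Lambda → Prop
  | none, _ => True
  | some _, none => False
  | some a, some b => Lambda.le a b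

lemma precLt_of_optLe {r₁ r₂ : Option Lambda} {s : Lambda} (h : optLe r₁ r₂)
    (h2 : precLt r₂ s) : precLt r₁ s := by
  match r₁, r₂ with
  | none, _ => trivial
  | some a, none => exact absurd h id
  | some a, some b => exact Lambda.lt_of_le_of_lt' h h2

lemma Wset_anti {r₁ r₂ : Option Lambda} {t : Lambda} {i : ℤˣ} (h : optLe r₁ r₂) :
    Wset r₂ t i ⊆ Wset r₁ t i := by
  rintro ⟨s, j⟩ ⟨⟨hp, hle⟩, hsign⟩
  exact ⟨⟨precLt_of_optLe h hp, hle⟩, hsign⟩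

/-- The domain of an optional element. -/
def domO : Option Lambda → Ordinal.{0}
  | none => 0
  | some r => r.dom

lemma exists_basic_nbhd {V : Set Dup} (hV : TopologicalSpace.GenerateOpen WBasis V) :
    ∀ t : Lambda, ∀ i : ℤˣ, (t, i) ∈ V → ∃ r, precLt r t ∧ Wset r t i ⊆ V := by
  induction hV with
  | basic S hS =>
    obtain ⟨r₀, t₀, i₀, hprec, rfl⟩ := hS
    intro t i hti
    obtain ⟨⟨hp, hle⟩, hsign⟩ := hti
    simp only at hsign
    by_cases heq : t = t₀
    · subst heq
      refine ⟨r₀, hp, ?_⟩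
      rw [hsign, ell_self, pow_zero, one_mul]
    · have hlt : Lambda.lt t t₀ := ⟨hle, heq⟩
      by_cases hd0 : t.dom = 0
      · refine ⟨none, trivial, ?_⟩
        rintro ⟨s, j⟩ ⟨⟨_, hsle⟩, hjsign⟩
        simp only at hjsign
        have hseq : s = t := by
          apply Lambda.toFun_eq_of_le hsle
          apply le_antisymm hsle.1
          rw [hd0]
          exact zero_le
        subst hseq
        rw [ell_self, pow_zero, one_mul] at hjsign
        subst hjsign
        exact ⟨⟨hp, hle⟩, hsign⟩
      · have hθ₀ : domO r₀ < t.dom := by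
          match r₀ with
          | none => exact pos_iff_ne_zero.mpr hd0
          | some r => exact Lambda.dom_lt_of_lt hp
        obtain ⟨θ, hθ1, hθ2, hθ3⟩ := exists_recenter hlt hθ₀
        refine ⟨some (t.restrict θ (le_of_lt hθ2)), ⟨t.restrict_le θ (le_of_lt hθ2),
          fun hc => by
            have := congrArg Lambda.dom hc
            rw [Lambda.restrict_dom] at this
            exact absurd this (ne_of_lt hθ2)⟩, ?_⟩
        rintro ⟨s, j⟩ ⟨⟨hsp, hsle⟩, hjsign⟩
        simp only at hjsign
        have hsd : θ < s.dom := by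
          rcases lt_or_eq_of_le hsp.1.1 with h' | h'
          · exact h'
          · exact absurd (Lambda.toFun_eq_of_le hsp.1 h') hsp.2
        have hcat := hθ3 s hsle hsd
        refine ⟨⟨?_, Lambda.le_trans hsle hlt.1⟩, ?_⟩
        · match r₀, hp, hθ1 with
          | none, _, _ => trivial
          | some r, hp, hθ1 =>
            have hrres : r.le (t.restrict θ (le_of_lt hθ2)) :=
              Lambda.le_of_le_le (show Lambda.lt r t from hp).1
                (t.restrict_le θ (le_of_lt hθ2)) hθ1
            exact Lambda.lt_of_le_of_lt' hrres hsp
        · rw [hjsign, hsign, ell_concat hcat, pow_add, mul_assoc]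
  | univ =>
    intro t i _
    exact ⟨none, trivial, Set.subset_univ _⟩
  | inter U₁ U₂ _ _ IH1 IH2 =>
    intro t i hti
    obtain ⟨r₁, hr₁, hsub₁⟩ := IH1 t i hti.1
    obtain ⟨r₂, hr₂, hsub₂⟩ := IH2 t i hti.2
    have hor : optLe r₁ r₂ ∨ optLe r₂ r₁ := by
      match r₁, r₂, hr₁, hr₂ with
      | none, _, _, _ => exact Or.inl trivial
      | some a, none, _, _ => exact Or.inr trivial
      | some a, some b, h₁, h₂ =>
        rcases le_total a.dom b.dom with h | h
        · exact Or.inl (Lambda.le_of_le_le (show Lambda.lt a t from h₁).1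
            (show Lambda.lt b t from h₂).1 h)
        · exact Or.inr (Lambda.le_of_le_le (show Lambda.lt b t from h₂).1
            (show Lambda.lt a t from h₁).1 h)
    rcases hor with h | h
    · exact ⟨r₂, hr₂, fun q hq => ⟨hsub₁ (Wset_anti h hq), hsub₂ hq⟩⟩
    · exact ⟨r₁, hr₁, fun q hq => ⟨hsub₁ hq, hsub₂ (Wset_anti h hq)⟩⟩
  | sUnion 𝒮 _ IH =>
    intro t i hti
    obtain ⟨S, hS, htiS⟩ := hti
    obtain ⟨r, hr, hsub⟩ := IH S hS t i htiS
    exact ⟨r, hr, hsub.trans (Set.subset_sUnion_of_mem hS)⟩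

end Basis
/-! ### Suprema of countable chains in `Lambda` -/

section ChainSup
open scoped Classical

variable (f : ℕ → Lambda)

private noncomputable def csFun (β : Ordinal.{0}) : ℕ :=
  if h : ∃ k, β < (f k).dom then (f (Nat.find h)).toFun β else 0

variable {f}

private lemma csFun_eq (hf : ∀ j k, j ≤ k → (f j).le (f k)) {k : ℕ} {β : Ordinal.{0}}
    (hβ : β < (f k).dom) : csFun f β = (f k).toFun β := by
  have hex : ∃ j, β < (f j).dom := ⟨k, hβ⟩
  rw [csFun, dif_pos hex]
  exact (hf (Nat.find hex) k (Nat.find_min' hex hβ)).2 β (Nat.find_spec hex)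

private lemma exists_stage_of_lt {o : Ordinal.{0}} (ho : o < ⨆ k, (f k).dom) :
    ∃ k, o < (f k).dom := by
  by_contra hc
  push_neg at hc
  exact absurd (ciSup_le hc) (not_le.mpr ho)

/-- The supremum of a countable chain in `Lambda`, provided an infinite set `E` of values
is avoided by the whole chain. -/
noncomputable def chainSup (hf : ∀ j k, j ≤ k → (f j).le (f k))
    (E : Set ℕ) (hE : E.Infinite)
    (hav : ∀ k β, β < (f k).dom → (f k).toFun β ∉ E) : Lambda where
  toFun := csFun f
  dom := ⨆ k, (f k).dom
  countable := by
    have h : (⨆ k, (f k).dom) < (Cardinal.aleph 1).ord := by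
      rw [Cardinal.ord_aleph]
      apply Ordinal.iSup_lt_omega_one
      intro k
      rw [← Cardinal.ord_aleph]
      rw [Cardinal.lt_ord, ← Cardinal.succ_aleph0, Order.lt_succ_iff]
      exact (f k).countable
    rw [Cardinal.lt_ord, ← Cardinal.succ_aleph0, Order.lt_succ_iff] at h
    exact h
  inj := by
    intro β γ hβ hγ he
    obtain ⟨k, hk⟩ := exists_stage_of_lt hβ
    obtain ⟨k', hk'⟩ := exists_stage_of_lt hγ
    have hβK : β < (f (max k k')).dom := lt_of_lt_of_le hk (hf k _ (le_max_left _ _)).1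
    have hγK : γ < (f (max k k')).dom := lt_of_lt_of_le hk' (hf k' _ (le_max_right _ _)).1
    rw [csFun_eq hf hβK, csFun_eq hf hγK] at he
    exact (f (max k k')).inj β γ hβK hγK he
  coinfinite := by
    apply hE.mono
    intro n hn β hβ
    obtain ⟨k, hk⟩ := exists_stage_of_lt hβ
    rw [csFun_eq hf hk]
    intro hc
    exact hav k β hk (hc ▸ hn)
  junk := by
    intro β hβ
    rw [csFun, dif_neg]
    rintro ⟨k, hk⟩
    exact hβ (lt_of_lt_of_le hk (le_ciSup (Ordinal.bddAbove_range _) k))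

variable (hf : ∀ j k, j ≤ k → (f j).le (f k)) (E : Set ℕ) (hE : E.Infinite)
    (hav : ∀ k β, β < (f k).dom → (f k).toFun β ∉ E)

lemma chainSup_dom : (chainSup hf E hE hav).dom = ⨆ k, (f k).dom := rfl

lemma le_chainSup (k : ℕ) : (f k).le (chainSup hf E hE hav) :=
  ⟨le_ciSup (Ordinal.bddAbove_range _) k, fun β hβ => (csFun_eq hf hβ).symm⟩

lemma chainSup_apply {k : ℕ} {β : Ordinal.{0}} (hβ : β < (f k).dom) :
    (chainSup hf E hE hav).toFun β = (f k).toFun β := csFun_eq hf hβ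

lemma chainSup_exists_stage {o : Ordinal.{0}} (ho : o < (chainSup hf E hE hav).dom) :
    ∃ k, o < (f k).dom := exists_stage_of_lt ho

end ChainSup
/-! ### The recursive construction -/

section Machine

/-- The initial pool: odd numbers. -/
def P0 : Set ℕ := {q | q % 2 = 1}

/-- The reserved set: even numbers. -/
def Eset : Set ℕ := {q | q % 2 = 0}

lemma P0_infinite : P0.Infinite := by
  apply Set.infinite_of_injective_forall_mem (f := fun k : ℕ => 2 * k + 1)
  · intro a b hab
    have h : 2 * a + 1 = 2 * b + 1 := hab
    omega
  · intro k
    show (2 * k + 1) % 2 = 1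
    omega

lemma Eset_infinite : Eset.Infinite := by
  apply Set.infinite_of_injective_forall_mem (f := fun k : ℕ => 2 * k)
  · intro a b hab
    have h : 2 * a = 2 * b := hab
    omega
  · intro k
    show (2 * k) % 2 = 0
    omega

/-- The empty element of `Lambda`. -/
noncomputable def lam0 : Lambda where
  toFun _ := 0
  dom := 0
  countable := by simp
  inj := fun β γ hβ _ _ => absurd hβ not_lt_zero
  coinfinite := by
    apply Set.infinite_univ.mono
    intro n _ β hβ
    exact absurd hβ not_lt_zero
  junk := fun _ _ => rfl

lemma lam0_rng : Lambda.rng lam0 = ∅ := by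
  ext m
  simp only [Lambda.rng, Set.mem_setOf_eq, Set.mem_empty_iff_false, iff_false]
  rintro ⟨β, hβ, _⟩
  exact absurd hβ not_lt_zero

/-- States of the construction. -/
abbrev St : Type 1 := Lambda × Set ℕ

open scoped Classical

variable (pa : Lambda → ℕ × ℤˣ) (rr : Lambda → Option Lambda)

/-- `v` has a cofinal internal supply of one-step points with colour `p`. -/
def SupplySpec (v : Lambda) (p : ℕ × ℤˣ) : Prop :=
  ∀ γ, γ < v.dom → ∃ x : Lambda, Lambda.lt x v ∧ γ < x.dom ∧ pa x = p ∧
    ∀ η, x.dom ≤ η → η < v.dom → v.toFun x.dom ≤ v.toFun η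

/-- Admissible candidates at state `s` for colour `p`; `b` indicates whether an internal
supply is also required. -/
def Cand (s : St) (p : ℕ × ℤˣ) (b : Bool) (v : Lambda) : Prop :=
  Lambda.lt s.1 v ∧ (∀ β, s.1.dom ≤ β → β < v.dom → v.toFun β ∈ s.2) ∧ pa v = p ∧
    (s.2 \ v.rng).Infinite ∧ (b = true → SupplySpec pa v p)

/-- Adopt a candidate if one exists. -/
noncomputable def adopt (s : St) (p : ℕ × ℤˣ) (b : Bool) : Lambda :=
  if h : ∃ v, Cand pa s p b v then Classical.choose h else s.1

/-- The designated internal point of an adopted candidate. -/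
noncomputable def xstar (v : Lambda) (p : ℕ × ℤˣ) (γ : Ordinal.{0}) : Lambda :=
  if h : ∃ x : Lambda, Lambda.lt x v ∧ γ < x.dom ∧ pa x = p ∧
      (∀ η, x.dom ≤ η → η < v.dom → v.toFun x.dom ≤ v.toFun η) then
    Classical.choose h
  else v

/-- Sign decoding. -/
def sgn (j : ℕ) : ℤˣ := if j % 2 = 0 then 1 else -1

/-- The round-robin schedule of requests. -/
def ask (k : ℕ) : Bool × ℕ × ℤˣ :=
  (decide (k % 2 = 0), (Nat.unpair (k / 2)).1, sgn (Nat.unpair (k / 2)).2)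

lemma sgn_surj (i : ℤˣ) (j : ℕ) : ∃ e < 2, sgn (2 * j + e) = i := by
  rcases Int.units_eq_one_or i with rfl | rfl
  · refine ⟨0, by omega, ?_⟩
    have h : (2 * j + 0) % 2 = 0 := by omega
    simp [sgn, h]
  · refine ⟨1, by omega, ?_⟩
    have h : (2 * j + 1) % 2 = 1 := by omega
    simp [sgn, h]

lemma ask_exists (b : Bool) (n : ℕ) (i : ℤˣ) (k₀ : ℕ) :
    ∃ k, k₀ ≤ k ∧ ask k = (b, n, i) := by
  obtain ⟨e, he, hsgn⟩ := sgn_surj i k₀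
  refine ⟨2 * Nat.pair n (2 * k₀ + e) + (if b then 0 else 1), ?_, ?_⟩
  · have h1 : 2 * k₀ + e ≤ Nat.pair n (2 * k₀ + e) := Nat.right_le_pair _ _
    have : k₀ ≤ Nat.pair n (2 * k₀ + e) := by omega
    omega
  · have hdiv : (2 * Nat.pair n (2 * k₀ + e) + (if b then 0 else 1)) / 2 =
        Nat.pair n (2 * k₀ + e) := by
      rcases b with _ | _ <;> simp <;> omega
    have hmod : (2 * Nat.pair n (2 * k₀ + e) + (if b then 0 else 1)) % 2 =
        (if b then 0 else 1) := by
      rcases b with _ | _ <;> simp <;> omega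
    rw [ask, hdiv, hmod, Nat.unpair_pair]
    rcases b with _ | _ <;> simp [hsgn]

/-- One step of the construction. -/
noncomputable def vOf (s : St) (k : ℕ) : Lambda := adopt pa s (ask k).2 (ask k).1

noncomputable def muOf (s : St) (k : ℕ) : ℕ :=
  if (ask k).1 then
    (vOf pa s k).toFun
      ((xstar pa (vOf pa s k) (ask k).2 (max (domO (rr (vOf pa s k))) s.1.dom)).dom)
  else 0

noncomputable def SOf (s : St) (k : ℕ) : Set ℕ :=
  {q | (q ∈ s.2 ∧ q ∉ (vOf pa s k).rng) ∧ muOf pa rr s k < q}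

noncomputable def aOf (s : St) (k : ℕ) : ℕ := sInf (SOf pa rr s k)

noncomputable def rOf (s : St) (k : ℕ) : ℕ := sInf {q ∈ SOf pa rr s k | aOf pa rr s k < q}

noncomputable def stepM (k : ℕ) (s : St) : St :=
  if h : aOf pa rr s k ∈ SOf pa rr s k then
    ((vOf pa s k).extend (aOf pa rr s k) h.1.2, {q ∈ SOf pa rr s k | rOf pa rr s k < q})
  else s

/-- The whole construction. -/
noncomputable def seqM : ℕ → St
  | 0 => (lam0, P0)
  | k + 1 => stepM pa rr k (seqM k)

/-- The construction invariant. -/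
def InvM (s : St) : Prop :=
  s.2.Infinite ∧ (∀ q ∈ s.2, q % 2 = 1) ∧ (∀ q ∈ s.2, q ∉ s.1.rng) ∧
    (∀ m ∈ s.1.rng, m % 2 = 1)

lemma infinite_gt {A : Set ℕ} (hA : A.Infinite) (μ : ℕ) : {q | q ∈ A ∧ μ < q}.Infinite := by
  apply (hA.diff (Set.finite_Iic μ)).mono
  rintro q ⟨hq, hq'⟩
  exact ⟨hq, by simpa using hq'⟩

lemma adopt_cases (s : St) (p : ℕ × ℤˣ) (b : Bool) :
    adopt pa s p b = s.1 ∨ Cand pa s p b (adopt pa s p b) := by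
  rw [adopt]
  split
  · next h => exact Or.inr (Classical.choose_spec h)
  · exact Or.inl rfl

lemma vOf_cases (s : St) (k : ℕ) :
    vOf pa s k = s.1 ∨ Cand pa s (ask k).2 (ask k).1 (vOf pa s k) := by
  rw [vOf]
  exact adopt_cases pa s (ask k).2 (ask k).1

lemma vOf_le (s : St) (k : ℕ) : s.1.le (vOf pa s k) := by
  rcases vOf_cases pa s k with h | h
  · rw [h]; exact Lambda.le_refl _
  · exact h.1.1

lemma SOf_infinite {s : St} (hs : InvM s) (k : ℕ) : (SOf pa rr s k).Infinite := by
  have hdiff : (s.2 \ (vOf pa s k).rng).Infinite := by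
    rcases vOf_cases pa s k with h | h
    · apply hs.1.mono
      intro q hq
      rw [h]
      exact ⟨hq, hs.2.2.1 q hq⟩
    · exact h.2.2.2.1
  exact infinite_gt hdiff (muOf pa rr s k)

lemma aOf_mem {s : St} (hs : InvM s) (k : ℕ) : aOf pa rr s k ∈ SOf pa rr s k :=
  Nat.sInf_mem (SOf_infinite pa rr hs k).nonempty

lemma rOf_mem {s : St} (hs : InvM s) (k : ℕ) :
    rOf pa rr s k ∈ {q ∈ SOf pa rr s k | aOf pa rr s k < q} :=
  Nat.sInf_mem (infinite_gt (SOf_infinite pa rr hs k) _).nonempty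

lemma stepM_eq {s : St} (hs : InvM s) (k : ℕ) :
    stepM pa rr k s = ((vOf pa s k).extend (aOf pa rr s k) (aOf_mem pa rr hs k).1.2,
      {q ∈ SOf pa rr s k | rOf pa rr s k < q}) := by
  rw [stepM, dif_pos (aOf_mem pa rr hs k)]

lemma stepM_inv {s : St} (hs : InvM s) (k : ℕ) : InvM (stepM pa rr k s) := by
  rw [stepM_eq pa rr hs k]
  have hvrng : ∀ m ∈ (vOf pa s k).rng, m % 2 = 1 := by
    intro m hm
    obtain ⟨β, hβ, he⟩ := hm
    rcases vOf_cases pa s k with h | h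
    · apply hs.2.2.2
      rw [← he]
      rw [h] at hβ ⊢
      exact ⟨β, hβ, rfl⟩
    · by_cases hβ' : β < s.1.dom
      · apply hs.2.2.2
        rw [← he, ← h.1.1.2 β hβ']
        exact ⟨β, hβ', rfl⟩
      · apply hs.2.1
        rw [← he]
        exact h.2.1 β (not_lt.mp hβ') hβ
  refine ⟨?_, ?_, ?_, ?_⟩
  · exact infinite_gt (SOf_infinite pa rr hs k) _
  · rintro q ⟨⟨⟨hq, _⟩, _⟩, _⟩
    exact hs.2.1 q hq
  · rintro q ⟨⟨⟨hq1, hq2⟩, _⟩, hq3⟩ hq4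
    rw [Lambda.extend_rng] at hq4
    rcases hq4 with hq4 | hq4
    · exact hq2 hq4
    · rw [Set.mem_singleton_iff] at hq4
      have := (rOf_mem pa rr hs k).2
      omega
  · intro m hm
    rw [Lambda.extend_rng] at hm
    rcases hm with hm | hm
    · exact hvrng m hm
    · rw [Set.mem_singleton_iff] at hm
      subst hm
      exact hs.2.1 _ (aOf_mem pa rr hs k).1.1

lemma seqM_inv : ∀ k, InvM (seqM pa rr k) := by
  intro k
  induction k with
  | zero =>
    refine ⟨P0_infinite, fun q hq => hq, fun q _ => ?_, fun m hm => ?_⟩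
    · rw [seqM, lam0_rng]; exact Set.notMem_empty q
    · rw [seqM, lam0_rng] at hm; exact absurd hm (Set.notMem_empty m)
  | succ k IH => exact stepM_inv pa rr IH k

/-- Abbreviations for the two components of the construction. -/
noncomputable def TT (k : ℕ) : Lambda := (seqM pa rr k).1
noncomputable def PP (k : ℕ) : Set ℕ := (seqM pa rr k).2

lemma seqM_succ_fst (k : ℕ) :
    TT pa rr (k + 1) = (vOf pa (seqM pa rr k) k).extend (aOf pa rr (seqM pa rr k) k)
      (aOf_mem pa rr (seqM_inv pa rr k) k).1.2 := by
  rw [TT]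
  show (stepM pa rr k (seqM pa rr k)).1 = _
  rw [stepM_eq pa rr (seqM_inv pa rr k) k]

lemma seqM_succ_snd (k : ℕ) :
    PP pa rr (k + 1) = {q ∈ SOf pa rr (seqM pa rr k) k | rOf pa rr (seqM pa rr k) k < q} := by
  rw [PP]
  show (stepM pa rr k (seqM pa rr k)).2 = _
  rw [stepM_eq pa rr (seqM_inv pa rr k) k]

lemma TT_lt_succ (k : ℕ) : (TT pa rr k).lt (TT pa rr (k + 1)) := by
  rw [seqM_succ_fst]
  exact Lambda.lt_of_le_of_lt' (vOf_le pa _ k) (Lambda.extend_lt _ _ _)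

lemma TT_mono : ∀ j k : ℕ, j ≤ k → (TT pa rr j).le (TT pa rr k) := by
  intro j k hjk
  induction hjk with
  | refl => exact Lambda.le_refl _
  | step h IH => exact Lambda.le_trans IH (TT_lt_succ pa rr _).1

lemma PP_succ_subset (k : ℕ) : PP pa rr (k + 1) ⊆ PP pa rr k := by
  rw [seqM_succ_snd]
  rintro q ⟨⟨⟨hq, _⟩, _⟩, _⟩
  exact hq

lemma PP_mono : ∀ j k : ℕ, j ≤ k → PP pa rr k ⊆ PP pa rr j := by
  intro j k hjk
  induction hjk with
  | refl => exact subset_rfl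
  | step h IH => exact (PP_succ_subset pa rr _).trans IH

lemma TT_new_vals (k : ℕ) : ∀ β, (TT pa rr k).dom ≤ β → β < (TT pa rr (k + 1)).dom →
    (TT pa rr (k + 1)).toFun β ∈ PP pa rr k := by
  intro β hβ1 hβ2
  rw [seqM_succ_fst] at hβ2 ⊢
  rw [Lambda.extend_dom, Order.lt_succ_iff] at hβ2
  rcases eq_or_lt_of_le hβ2 with hβ' | hβ'
  · rw [Lambda.extend, hβ']
    simp only [if_pos rfl]
    exact (aOf_mem pa rr (seqM_inv pa rr k) k).1.1
  · rw [Lambda.extend]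
    simp only [if_neg (ne_of_lt hβ')]
    rcases vOf_cases pa (seqM pa rr k) k with h | h
    · exfalso
      rw [h] at hβ'
      exact absurd hβ1 (not_le.mpr hβ')
    · exact h.2.1 β hβ1 hβ'

lemma PP_gt_aOf (k : ℕ) : ∀ q ∈ PP pa rr (k + 1), aOf pa rr (seqM pa rr k) k < q := by
  intro q hq
  rw [seqM_succ_snd] at hq
  have h1 := hq.2
  have h2 := (rOf_mem pa rr (seqM_inv pa rr k) k).2
  omega

end Machine
/-! ### The limit of the construction -/

section Limit
open scoped Classical

variable (pa : Lambda → ℕ × ℤˣ) (rr : Lambda → Option Lambda)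

lemma TT_avoid : ∀ k β, β < (TT pa rr k).dom → (TT pa rr k).toFun β ∉ Eset := by
  intro k β hβ hc
  have h1 := (seqM_inv pa rr k).2.2.2 ((TT pa rr k).toFun β) ⟨β, hβ, rfl⟩
  have h2 : (TT pa rr k).toFun β % 2 = 0 := hc
  omega

/-- The limit point of the construction. -/
noncomputable def UU : Lambda :=
  chainSup (TT_mono pa rr) Eset Eset_infinite (TT_avoid pa rr)

lemma TT_le_UU (k : ℕ) : (TT pa rr k).le (UU pa rr) := le_chainSup _ _ _ _ _

lemma TT_dom_lt_UU (k : ℕ) : (TT pa rr k).dom < (UU pa rr).dom :=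
  lt_of_lt_of_le (Lambda.dom_lt_of_lt (TT_lt_succ pa rr k)) (TT_le_UU pa rr (k + 1)).1

lemma TT_lt_UU (k : ℕ) : (TT pa rr k).lt (UU pa rr) :=
  Lambda.lt_of_dom_lt (TT_le_UU pa rr k) (TT_dom_lt_UU pa rr k)

lemma UU_exists_stage {o : Ordinal.{0}} (ho : o < (UU pa rr).dom) :
    ∃ k, o < (TT pa rr k).dom := chainSup_exists_stage _ _ _ _ ho

lemma UU_apply {k : ℕ} {β : Ordinal.{0}} (hβ : β < (TT pa rr k).dom) :
    (UU pa rr).toFun β = (TT pa rr k).toFun β := chainSup_apply _ _ _ _ hβ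

lemma TT_dom_zero : (TT pa rr 0).dom = 0 := rfl

/-- Every value of `UU` beyond stage `k` lies in the pool `PP k`. -/
lemma UU_vals (k : ℕ) : ∀ β, (TT pa rr k).dom ≤ β → β < (UU pa rr).dom →
    (UU pa rr).toFun β ∈ PP pa rr k := by
  intro β hβ1 hβ2
  obtain ⟨j, hj⟩ := UU_exists_stage pa rr hβ2
  -- find the interval stage
  have hstage : ∃ j', (TT pa rr j').dom ≤ β ∧ β < (TT pa rr (j' + 1)).dom := by
    clear hβ1
    induction j with
    | zero =>
      rw [TT_dom_zero] at hj
      exact absurd hj not_lt_zero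
    | succ j IH =>
      by_cases h : β < (TT pa rr j).dom
      · exact IH h
      · exact ⟨j, not_lt.mp h, hj⟩
  obtain ⟨j', hj'1, hj'2⟩ := hstage
  have hkj : k ≤ j' := by
    by_contra hc
    push_neg at hc
    exact absurd (lt_of_le_of_lt hβ1 (lt_of_lt_of_le hj'2 (TT_mono pa rr _ _ hc).1))
      (lt_irrefl _)
  rw [UU_apply pa rr hj'2]
  exact PP_mono pa rr k j' hkj (TT_new_vals pa rr j' β hj'1 hj'2)

lemma UU_rng_stage {m : ℕ} (hm : m ∈ (UU pa rr).rng) : ∃ j, m ∈ (TT pa rr j).rng := by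
  obtain ⟨β, hβ, he⟩ := hm
  obtain ⟨j, hj⟩ := UU_exists_stage pa rr hβ
  exact ⟨j, β, hj, by rw [← he, UU_apply pa rr hj]⟩

/-- The retired value at stage `k`. -/
noncomputable def rho (k : ℕ) : ℕ := rOf pa rr (seqM pa rr k) k

lemma rho_mem_PP (k : ℕ) : rho pa rr k ∈ PP pa rr k :=
  ((rOf_mem pa rr (seqM_inv pa rr k) k).1).1.1

lemma rho_not_PP_succ (k : ℕ) : rho pa rr k ∉ PP pa rr (k + 1) := by
  rw [seqM_succ_snd]
  rintro ⟨-, h2⟩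
  exact lt_irrefl _ h2

lemma rho_not_rng (k : ℕ) : ∀ j, rho pa rr k ∉ (TT pa rr j).rng := by
  have hbase : rho pa rr k ∉ (TT pa rr (k + 1)).rng := by
    rw [seqM_succ_fst, Lambda.extend_rng]
    rintro (h | h)
    · exact ((rOf_mem pa rr (seqM_inv pa rr k) k).1).1.2 h
    · rw [Set.mem_singleton_iff] at h
      exact lt_irrefl _ (h ▸ (rOf_mem pa rr (seqM_inv pa rr k) k).2)
  have hstep : ∀ j, k + 1 ≤ j → rho pa rr k ∉ (TT pa rr j).rng := by
    intro j hj
    induction j, hj using Nat.le_induction with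
    | base => exact hbase
    | succ j hj IH =>
      rintro ⟨β, hβ, he⟩
      by_cases h : β < (TT pa rr j).dom
      · exact IH ⟨β, h, by rw [← he, (TT_mono pa rr j (j + 1) (Nat.le_succ j)).2 β h]⟩
      · have hval := TT_new_vals pa rr j β (not_lt.mp h) hβ
        have := PP_mono pa rr (k + 1) j hj hval
        rw [he] at this
        exact rho_not_PP_succ pa rr k this
  intro j
  rcases le_or_gt j (k + 1) with h | h
  · intro hc
    exact hbase (Lambda.rng_mono (TT_mono pa rr j (k + 1) h) hc)
  · exact hstep j (le_of_lt h)

lemma rho_ne {a b : ℕ} (hab : a < b) : rho pa rr a ≠ rho pa rr b := by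
  intro hc
  have h1 : rho pa rr b ∈ PP pa rr (a + 1) :=
    PP_mono pa rr (a + 1) b hab (rho_mem_PP pa rr b)
  rw [← hc] at h1
  exact rho_not_PP_succ pa rr a h1

lemma PP_diff_UU_infinite (k : ℕ) : (PP pa rr k \ (UU pa rr).rng).Infinite := by
  apply Set.infinite_of_injective_forall_mem (f := fun m : ℕ => rho pa rr (k + m))
  · intro a b hab
    by_contra hne
    rcases lt_or_gt_of_ne (fun h : a = b => hne h) with h | h
    · exact rho_ne pa rr (by omega : k + a < k + b) hab
    · exact rho_ne pa rr (by omega : k + b < k + a) hab.symm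
  · intro m
    refine ⟨PP_mono pa rr k (k + m) (by omega) (rho_mem_PP pa rr (k + m)), fun hc => ?_⟩
    obtain ⟨j, hj⟩ := UU_rng_stage pa rr hc
    exact rho_not_rng pa rr (k + m) j hj

end Limit
section Witness
open scoped Classical

variable (pa : Lambda → ℕ × ℤˣ) (rr : Lambda → Option Lambda)

lemma vOf_spec {s : St} {k : ℕ} (hex : ∃ v, Cand pa s (ask k).2 (ask k).1 v) :
    Cand pa s (ask k).2 (ask k).1 (vOf pa s k) := by
  rw [vOf, adopt, dif_pos hex]
  exact Classical.choose_spec hex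

lemma UU_cand (k : ℕ) (b : Bool)
    (hb : b = true → SupplySpec pa (UU pa rr) (pa (UU pa rr))) :
    Cand pa (seqM pa rr k) (pa (UU pa rr)) b (UU pa rr) :=
  ⟨TT_lt_UU pa rr k, fun β hβ1 hβ2 => UU_vals pa rr k β hβ1 hβ2, rfl,
    PP_diff_UU_infinite pa rr k, hb⟩

lemma vOf_dom_lt_TT_succ (k : ℕ) :
    (vOf pa (seqM pa rr k) k).dom < (TT pa rr (k + 1)).dom := by
  rw [seqM_succ_fst]
  exact Order.lt_succ _

lemma UU_apply_vdom (k : ℕ) :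
    (UU pa rr).toFun (vOf pa (seqM pa rr k) k).dom = aOf pa rr (seqM pa rr k) k := by
  rw [UU_apply pa rr (vOf_dom_lt_TT_succ pa rr k), seqM_succ_fst]
  exact Lambda.extend_apply_dom _ _ _

lemma UU_onestep (k : ℕ) : ∀ η, (vOf pa (seqM pa rr k) k).dom ≤ η → η < (UU pa rr).dom →
    (UU pa rr).toFun (vOf pa (seqM pa rr k) k).dom ≤ (UU pa rr).toFun η := by
  intro η h1 h2
  rcases eq_or_lt_of_le h1 with he | hl
  · rw [← he]
  · have hη3 : (TT pa rr (k + 1)).dom ≤ η := by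
      rw [seqM_succ_fst, Lambda.extend_dom, Order.succ_le_iff]
      exact hl
    rw [UU_apply_vdom]
    exact le_of_lt (PP_gt_aOf pa rr k _ (UU_vals pa rr (k + 1) η hη3 h2))

lemma vOf_lt_UU (k : ℕ) : (vOf pa (seqM pa rr k) k).lt (UU pa rr) := by
  apply Lambda.lt_of_le_of_lt' _ (TT_lt_UU pa rr (k + 1))
  rw [seqM_succ_fst]
  exact (Lambda.extend_lt _ _ _).1

lemma ell_vOf_UU (k : ℕ) : ell (vOf pa (seqM pa rr k) k) (UU pa rr) = 1 :=
  ell_single (lt_of_lt_of_le (vOf_dom_lt_TT_succ pa rr k) (TT_le_UU pa rr (k + 1)).1)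
    (UU_onestep pa rr k)

lemma UU_supply : SupplySpec pa (UU pa rr) (pa (UU pa rr)) := by
  intro γ hγ
  obtain ⟨k₀, hk₀⟩ := UU_exists_stage pa rr hγ
  obtain ⟨k, hkk₀, hask⟩ := ask_exists false (pa (UU pa rr)).1 (pa (UU pa rr)).2 k₀
  have hask2 : (ask k).2 = pa (UU pa rr) := by rw [hask]
  have hask1 : (ask k).1 = false := by rw [hask]
  have hex : ∃ v, Cand pa (seqM pa rr k) (ask k).2 (ask k).1 v := by
    refine ⟨UU pa rr, ?_⟩
    rw [hask2, hask1]
    exact UU_cand pa rr k false (fun h => absurd h Bool.false_ne_true)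
  have hv := vOf_spec pa hex
  refine ⟨vOf pa (seqM pa rr k) k, vOf_lt_UU pa rr k, ?_, ?_, ?_⟩
  · calc γ < (TT pa rr k₀).dom := hk₀
      _ ≤ (TT pa rr k).dom := (TT_mono pa rr k₀ k hkk₀).1
      _ < _ := Lambda.dom_lt_of_lt hv.1
  · rw [← hask2]
    exact hv.2.2.1
  · exact UU_onestep pa rr k

end Witness
lemma units_ne_neg (i : ℤˣ) : i ≠ -i := by
  rcases Int.units_eq_one_or i with rfl | rfl <;> decide

/-- The `Λ`-duplicate `D` is not a Gruenhage space. -/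
theorem dup_not_gruenhage : ¬ Gruenhage Dup := by
  rintro ⟨𝒰, R, hopen, hsep, hint⟩
  -- For each `t`, a member of some `𝒰 n` containing exactly one of the twins of `t`.
  have hdata : ∀ t : Lambda, ∃ (n : ℕ) (V : Set Dup) (i : ℤˣ),
      V ∈ 𝒰 n ∧ ((t, i) : Dup) ∈ V ∧ ((t, -i) : Dup) ∉ V := by
    intro t
    obtain ⟨n, V, hV, z, hz⟩ := hsep (t, 1) (t, -1) (by
      intro h
      exact units_ne_neg 1 (congrArg Prod.snd h))
    have hzz : z ∈ ({((t, 1) : Dup), (t, -1)} : Set Dup) ∩ V := by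
      rw [hz]; exact Set.mem_singleton z
    rcases Set.mem_insert_iff.mp hzz.1 with h1 | h1
    · refine ⟨n, V, 1, hV, h1 ▸ hzz.2, fun hc => ?_⟩
      have hmem : ((t, -1) : Dup) ∈ ({((t, 1) : Dup), (t, -1)} : Set Dup) ∩ V :=
        ⟨Set.mem_insert_of_mem _ rfl, hc⟩
      rw [hz, Set.mem_singleton_iff, h1] at hmem
      exact units_ne_neg 1 (congrArg Prod.snd hmem).symm
    · rw [Set.mem_singleton_iff] at h1
      refine ⟨n, V, -1, hV, h1 ▸ hzz.2, ?_⟩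
      rw [neg_neg]
      intro hc
      have hmem : ((t, 1) : Dup) ∈ ({((t, 1) : Dup), (t, -1)} : Set Dup) ∩ V :=
        ⟨Set.mem_insert _ _, hc⟩
      rw [hz, Set.mem_singleton_iff, h1] at hmem
      exact units_ne_neg 1 (congrArg Prod.snd hmem)
  choose nn VV ii hVmem hVin hVout using hdata
  -- radii of basic neighbourhoods
  have hrrex : ∀ t : Lambda, ∃ r, precLt r t ∧ Wset r t (ii t) ⊆ VV t := fun t =>
    exists_basic_nbhd (hopen (nn t) (VV t) (hVmem t)) t (ii t) (hVin t)
  choose rr hrr1 hrr2 using hrrex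
  set pa : Lambda → ℕ × ℤˣ := fun t => (nn t, ii t) with hpa_def
  set U : Lambda := UU pa rr with hU_def
  -- a stage beyond the radius of `U`
  have hdrlt : domO (rr U) < U.dom := by
    rcases hrrUU : rr U with _ | r
    · have h0 : domO (none : Option Lambda) = 0 := rfl
      rw [h0]
      calc (0 : Ordinal.{0}) ≤ (TT pa rr 0).dom := le_of_eq (TT_dom_zero pa rr).symm
        _ < U.dom := TT_dom_lt_UU pa rr 0
    · have h1 := hrr1 U
      rw [hrrUU] at h1
      exact Lambda.dom_lt_of_lt h1
  obtain ⟨k₀, hk₀⟩ := UU_exists_stage pa rr hdrlt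
  obtain ⟨k', hk'0, hask⟩ := ask_exists true (pa U).1 (pa U).2 k₀
  have hask2 : (ask k').2 = pa U := by rw [hask]
  have hask1 : (ask k').1 = true := by rw [hask]
  -- adoption at stage `k'`
  have hex : ∃ v, Cand pa (seqM pa rr k') (ask k').2 (ask k').1 v := by
    refine ⟨U, ?_⟩
    rw [hask2, hask1]
    exact UU_cand pa rr k' true (fun _ => UU_supply pa rr)
  have hy := vOf_spec pa hex
  set y : Lambda := vOf pa (seqM pa rr k') k' with hy_def
  have hpay : pa y = pa U := by rw [← hask2]; exact hy.2.2.1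
  have hsupp : SupplySpec pa y ((ask k').2) := hy.2.2.2.2 hask1
  -- the designated internal point
  set γ : Ordinal.{0} := max (domO (rr y)) ((seqM pa rr k').1.dom) with hγ_def
  have hTk'y : ((seqM pa rr k').1).lt y := hy.1
  have hγlt : γ < y.dom := by
    apply max_lt
    · rcases hrrUy : rr y with _ | r
      · exact lt_of_le_of_lt zero_le (Lambda.dom_lt_of_lt hTk'y)
      · have h1 := hrr1 y
        rw [hrrUy] at h1
        exact Lambda.dom_lt_of_lt h1
    · exact Lambda.dom_lt_of_lt hTk'y
  have hxex : ∃ x : Lambda, Lambda.lt x y ∧ γ < x.dom ∧ pa x = (ask k').2 ∧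
      (∀ η, x.dom ≤ η → η < y.dom → y.toFun x.dom ≤ y.toFun η) := hsupp γ hγlt
  have hxsteq : xstar pa y (ask k').2 γ = Classical.choose hxex := by
    rw [xstar, dif_pos hxex]
  set x : Lambda := xstar pa y (ask k').2 γ with hx_def
  have hxst : Lambda.lt x y ∧ γ < x.dom ∧ pa x = (ask k').2 ∧
      (∀ η, x.dom ≤ η → η < y.dom → y.toFun x.dom ≤ y.toFun η) := by
    rw [hxsteq]
    exact Classical.choose_spec hxex
  have hpax : pa x = pa U := hxst.2.2.1.trans hask2
  -- the placed value
  set a : ℕ := aOf pa rr (seqM pa rr k') k' with ha_def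
  have haS := aOf_mem pa rr (seqM_inv pa rr k') k'
  have hμ : muOf pa rr (seqM pa rr k') k' = y.toFun x.dom := by
    rw [muOf, if_pos hask1]
  have hμa : y.toFun x.dom < a := by rw [← hμ]; exact haS.2
  -- order relations
  have hyT : y.le (TT pa rr (k' + 1)) := by
    rw [seqM_succ_fst]
    exact (Lambda.extend_lt _ _ _).1
  have hyU : y.le U := Lambda.le_trans hyT (TT_le_UU pa rr (k' + 1))
  have hyltU : y.lt U := vOf_lt_UU pa rr k'
  have hxltU : x.lt U := Lambda.lt_of_le_of_lt' hxst.1.1 hyltU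
  have hxdomy : x.dom < y.dom := Lambda.dom_lt_of_lt hxst.1
  have hUx : U.toFun x.dom = y.toFun x.dom := (hyU.2 x.dom hxdomy).symm
  -- the three walks have length one
  have hellxy : ell x y = 1 := ell_single hxdomy hxst.2.2.2
  have hellyU : ell y U = 1 := ell_vOf_UU pa rr k'
  have haU : U.toFun y.dom = a := UU_apply_vdom pa rr k'
  have hellxU : ell x U = 1 := by
    apply ell_single (lt_trans hxdomy (Lambda.dom_lt_of_lt hyltU))
    intro η h1 h2
    rcases lt_or_ge η y.dom with hη | hη
    · rw [hUx, ← hyU.2 η hη]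
      exact hxst.2.2.2 η h1 hη
    · have hstep := UU_onestep pa rr k' η hη h2
      rw [hUx]
      calc y.toFun x.dom ≤ a := le_of_lt hμa
        _ = U.toFun y.dom := haU.symm
        _ ≤ U.toFun η := hstep
  -- colour equalities
  have hiiy : ii y = ii U := congrArg Prod.snd hpay
  have hnny : nn y = nn U := congrArg Prod.fst hpay
  have hiix : ii x = ii U := congrArg Prod.snd hpax
  have hnnx : nn x = nn U := congrArg Prod.fst hpax
  -- memberships in the three basic sets
  have hTk'γ : (TT pa rr k').dom ≤ γ := by rw [hγ_def]; exact le_max_right _ _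
  have hdrx : domO (rr U) < x.dom := by
    calc domO (rr U) < (TT pa rr k₀).dom := hk₀
      _ ≤ (TT pa rr k').dom := (TT_mono pa rr k₀ k' hk'0).1
      _ ≤ γ := hTk'γ
      _ < x.dom := hxst.2.1
  have hdry : domO (rr U) < y.dom := by
    calc domO (rr U) < (TT pa rr k₀).dom := hk₀
      _ ≤ (TT pa rr k').dom := (TT_mono pa rr k₀ k' hk'0).1
      _ < y.dom := Lambda.dom_lt_of_lt hTk'y
  have hm1 : ((x, -(ii U)) : Dup) ∈ Wset (rr y) y (ii y) := by
    refine ⟨⟨?_, hxst.1.1⟩, ?_⟩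
    · rcases hrrUy : rr y with _ | r
      · trivial
      · have h1 := hrr1 y
        rw [hrrUy] at h1
        have hdom : r.dom < x.dom := by
          apply lt_of_le_of_lt _ hxst.2.1
          rw [hγ_def]
          calc r.dom = domO (rr y) := by rw [hrrUy]; rfl
            _ ≤ _ := le_max_left _ _
        exact Lambda.lt_of_dom_lt (Lambda.le_of_le_le h1.1 hxst.1.1 (le_of_lt hdom)) hdom
    · show -(ii U) = (-1) ^ ell x y * ii y
      rw [hellxy, pow_one, hiiy, neg_one_mul]
  have hm2 : ((x, -(ii U)) : Dup) ∈ Wset (rr U) U (ii U) := by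
    refine ⟨⟨?_, hxltU.1⟩, ?_⟩
    · rcases hrrUU₂ : rr U with _ | r
      · trivial
      · have h1 := hrr1 U
        rw [hrrUU₂] at h1 hdrx
        exact Lambda.lt_of_dom_lt (Lambda.le_of_le_le h1.1 hxltU.1 (le_of_lt hdrx)) hdrx
    · show -(ii U) = (-1) ^ ell x U * ii U
      rw [hellxU, pow_one, neg_one_mul]
  have hm3 : ((y, -(ii U)) : Dup) ∈ Wset (rr U) U (ii U) := by
    refine ⟨⟨?_, hyU⟩, ?_⟩
    · rcases hrrUU₂ : rr U with _ | r
      · trivial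
      · have h1 := hrr1 U
        rw [hrrUU₂] at h1 hdry
        exact Lambda.lt_of_dom_lt (Lambda.le_of_le_le h1.1 hyU (le_of_lt hdry)) hdry
    · show -(ii U) = (-1) ^ ell y U * ii U
      rw [hellyU, pow_one, neg_one_mul]
  have hin1 : ((x, -(ii U)) : Dup) ∈ VV y := hrr2 y hm1
  have hin2 : ((x, -(ii U)) : Dup) ∈ VV U := hrr2 U hm2
  have hin3 : ((y, -(ii U)) : Dup) ∈ VV U := hrr2 U hm3
  have hout_y : ((y, -(ii U)) : Dup) ∉ VV y := by rw [← hiiy]; exact hVout y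
  have hout_x : ((x, -(ii U)) : Dup) ∉ VV x := by rw [← hiix]; exact hVout x
  by_cases hVyU : VV y = VV U
  · exact hout_y (by rw [hVyU]; exact hin3)
  · have hRmem : ((x, -(ii U)) : Dup) ∈ R (nn U) := by
      rw [← hint (nn U) (VV y) (by rw [← hnny]; exact hVmem y) (VV U) (hVmem U) hVyU]
      exact ⟨hin1, hin2⟩
    by_cases hVxy : VV x = VV y
    · exact hout_x (by rw [hVxy]; exact hin1)
    · have hxmem : ((x, -(ii U)) : Dup) ∈ VV x ∩ VV y := by
        rw [hint (nn U) (VV x) (by rw [← hnnx]; exact hVmem x) (VV y)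
          (by rw [← hnny]; exact hVmem y) hVxy]
        exact hRmem
      exact hout_x hxmem.1
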